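/- Let M = (S, A, P, R, H, μ) be a finite MDP and π : S → A a stationary policy. If H ≥ 2·ln(8 · |S|^{4|S|}), then with γ = 1 − ln(8 · |S|^{4|S|})/H, it holds that (1/(64 · |S|^{8|S|})) · V^π_{M,H} ≤ V^π_{M,γ} ≤ 2 · V^π_{M,H}. -/

import Mathlib

open Finset

/-- `pReach μ P L s` is the probability `p_L(s, C)` of reaching `s` with exactly `L` steps in the
Markov chain `C = (S, P, μ)`. -/
noncomputable def pReach {S : Type} [Fintype S] (μ : S → ℝ) (P : S → S → ℝ)
    (L : ℕ) (s : S) : ℝ :=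
  ∑ T : Fin L → S,
    (fun f : ℕ → S => μ (f 0) * ∏ h ∈ Finset.range L, P (f h) (f (h + 1)))
      (fun n => if h : n < L then T ⟨n, h⟩ else s)

/-- Finite-horizon value of a stationary policy, written via the induced Markov chain `Pc` and
mean reward function `rc`: `V = Σ_s Σ_{h<L} p_h(s) · E[R(s, π(s))]`. -/
noncomputable def Vfin {S : Type} [Fintype S] (μ : S → ℝ) (Pc : S → S → ℝ) (rc : S → ℝ)
    (L : ℕ) : ℝ :=
  ∑ s : S, (∑ h ∈ Finset.range L, pReach μ Pc h s) * rc s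

/-- Discounted value of a stationary policy: `V = Σ_s Σ_{h≥0} γ^h · p_h(s) · E[R(s, π(s))]`. -/
noncomputable def Vdisc {S : Type} [Fintype S] (μ : S → ℝ) (Pc : S → S → ℝ) (rc : S → ℝ)
    (γ : ℝ) : ℝ :=
  ∑ s : S, (∑' h : ℕ, γ ^ h * pReach μ Pc h s) * rc s

namespace Stmt4Aux

variable {S : Type} [Fintype S]

lemma pReach_zero (μ : S → ℝ) (P : S → S → ℝ) (s : S) : pReach μ P 0 s = μ s := by
  simp [pReach]

lemma pReach_succ (μ : S → ℝ) (P : S → S → ℝ) (L : ℕ) (s : S) :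
    pReach μ P (L + 1) s = ∑ s' : S, pReach μ P L s' * P s' s := by
  classical
  let e : ((Fin L → S) × S) ≃ (Fin (L + 1) → S) :=
    { toFun := fun p => Fin.snoc p.1 p.2
      invFun := fun T => (fun i => T i.castSucc, T (Fin.last L))
      left_inv := by
        rintro ⟨U, a⟩
        simp
      right_inv := by
        intro T
        exact Fin.snoc_init_self T }
  rw [pReach, ← e.sum_comp]
  rw [Fintype.sum_prod_type]
  rw [Finset.sum_comm]
  refine Finset.sum_congr rfl ?_
  intro a _
  rw [pReach, Finset.sum_mul]
  refine Finset.sum_congr rfl ?_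
  intro U _
  -- unfold the two path functions
  set fT : ℕ → S := fun n => if h : n < L + 1 then (e (U, a)) ⟨n, h⟩ else s with hfT
  set gU : ℕ → S := fun n => if h : n < L then U ⟨n, h⟩ else a with hgU
  have hfg : ∀ n, n ≤ L → fT n = gU n := by
    intro n hn
    have hn1 : n < L + 1 := Nat.lt_succ_of_le hn
    have heq : ∀ p : (Fin L → S) × S, e p = Fin.snoc p.1 p.2 := fun p => rfl
    rcases lt_or_eq_of_le hn with hl | he
    · simp only [hfT, hgU, dif_pos hn1, dif_pos hl, heq]
      exact @Fin.snoc_castSucc L (fun _ => S) a U ⟨n, hl⟩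
    · subst he
      simp only [hfT, hgU, dif_pos hn1, dif_neg (lt_irrefl n), heq]
      exact @Fin.snoc_last n (fun _ => S) a U
  have hfL : fT L = a := by
    rw [hfg L le_rfl]; simp only [hgU, dif_neg (lt_irrefl L)]
  have hfL1 : fT (L + 1) = s := by
    simp only [hfT, dif_neg (lt_irrefl (L + 1))]
  show μ (fT 0) * ∏ h ∈ Finset.range (L + 1), P (fT h) (fT (h + 1))
      = μ (gU 0) * (∏ h ∈ Finset.range L, P (gU h) (gU (h + 1))) * P a s
  rw [Finset.prod_range_succ, hfL, hfL1]
  rw [hfg 0 (Nat.zero_le L)]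
  have : ∏ h ∈ Finset.range L, P (fT h) (fT (h + 1))
      = ∏ h ∈ Finset.range L, P (gU h) (gU (h + 1)) := by
    refine Finset.prod_congr rfl ?_
    intro h hh
    rw [Finset.mem_range] at hh
    rw [hfg h hh.le, hfg (h + 1) (Nat.succ_le_of_lt hh)]
  rw [this, mul_assoc]

lemma pReach_nonneg (μ : S → ℝ) (P : S → S → ℝ) (hμ : ∀ i, 0 ≤ μ i)
    (hP : ∀ i j, 0 ≤ P i j) : ∀ (L : ℕ) (s : S), 0 ≤ pReach μ P L s := by
  intro L
  induction L with
  | zero => intro s; rw [pReach_zero]; exact hμ s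
  | succ L ih =>
    intro s
    rw [pReach_succ]
    exact Finset.sum_nonneg fun s' _ => mul_nonneg (ih s') (hP s' s)

lemma pReach_mass (μ : S → ℝ) (P : S → S → ℝ) (hμ1 : ∑ i, μ i = 1)
    (hP1 : ∀ i, ∑ j, P i j = 1) : ∀ L : ℕ, ∑ s, pReach μ P L s = 1 := by
  intro L
  induction L with
  | zero => simpa [pReach_zero] using hμ1
  | succ L ih =>
    simp only [pReach_succ]
    rw [Finset.sum_comm]
    calc ∑ s' : S, ∑ s : S, pReach μ P L s' * P s' s
        = ∑ s' : S, pReach μ P L s' * ∑ s : S, P s' s := by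
          simp [Finset.mul_sum]
      _ = 1 := by simp [hP1]; exact ih

section Mat

set_option linter.unusedSectionVars false

variable [DecidableEq S]

/-- scalar functional  μᵀ M r -/
def phiA (μ r : S → ℝ) (M : Matrix S S ℝ) : ℝ := ∑ i, ∑ j, μ i * (M i j * r j)

lemma phiA_add (μ r : S → ℝ) (A B : Matrix S S ℝ) :
    phiA μ r (A + B) = phiA μ r A + phiA μ r B := by
  simp [phiA, Matrix.add_apply, mul_add, add_mul, Finset.sum_add_distrib]

lemma phiA_sub (μ r : S → ℝ) (A B : Matrix S S ℝ) :
    phiA μ r (A - B) = phiA μ r A - phiA μ r B := by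
  simp [phiA, Matrix.sub_apply, mul_sub, sub_mul, Finset.sum_sub_distrib]

lemma phiA_sum (μ r : S → ℝ) {ι : Type*} (s : Finset ι) (f : ι → Matrix S S ℝ) :
    phiA μ r (∑ k ∈ s, f k) = ∑ k ∈ s, phiA μ r (f k) := by
  classical
  induction s using Finset.cons_induction with
  | empty => simp [phiA]
  | cons a s ha ih => rw [Finset.sum_cons, phiA_add, ih, Finset.sum_cons]

lemma phiA_smul (μ r : S → ℝ) (c : ℝ) (A : Matrix S S ℝ) :
    phiA μ r (c • A) = c * phiA μ r A := by
  simp only [phiA, Matrix.smul_apply, smul_eq_mul, Finset.mul_sum]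
  refine Finset.sum_congr rfl fun i _ => Finset.sum_congr rfl fun j _ => by ring

lemma phiA_nonneg (μ r : S → ℝ) (hμ : ∀ i, 0 ≤ μ i) (hr : ∀ j, 0 ≤ r j)
    (A : Matrix S S ℝ) (hA : ∀ i j, 0 ≤ A i j) : 0 ≤ phiA μ r A :=
  Finset.sum_nonneg fun i _ => Finset.sum_nonneg fun j _ =>
    mul_nonneg (hμ i) (mul_nonneg (hA i j) (hr j))

lemma matNN_mul {A B : Matrix S S ℝ} (hA : ∀ i j, 0 ≤ A i j) (hB : ∀ i j, 0 ≤ B i j) :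
    ∀ i j, 0 ≤ (A * B) i j := fun i j => by
  rw [Matrix.mul_apply]
  exact Finset.sum_nonneg fun k _ => mul_nonneg (hA i k) (hB k j)

lemma matNN_one : ∀ i j, 0 ≤ (1 : Matrix S S ℝ) i j := fun i j => by
  rw [Matrix.one_apply]; split <;> norm_num

lemma matNN_pow {A : Matrix S S ℝ} (hA : ∀ i j, 0 ≤ A i j) (m : ℕ) :
    ∀ i j, 0 ≤ (A ^ m) i j := by
  induction m with
  | zero => simpa using matNN_one
  | succ m ih => rw [pow_succ]; exact matNN_mul ih hA

/-- diagonal 0/1 matrix unit -/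
def Em (v : S) : Matrix S S ℝ := Matrix.of fun a b => if a = v ∧ b = v then 1 else 0

lemma Em_apply (v a b : S) : Em v a b = if a = v ∧ b = v then 1 else 0 := rfl

lemma Em_sum : (∑ v : S, Em v) = (1 : Matrix S S ℝ) := by
  ext a b
  rw [Matrix.sum_apply, Matrix.one_apply]
  by_cases hab : a = b
  · subst hab
    rw [if_pos rfl, Finset.sum_eq_single a]
    · simp [Em_apply]
    · intro v _ hv
      rw [Em_apply, if_neg (fun h => hv h.1.symm)]
    · intro h; exact absurd (Finset.mem_univ a) h
  · rw [if_neg hab, Finset.sum_eq_zero]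
    intro v _
    rw [Em_apply, if_neg (fun h => hab (h.1.trans h.2.symm))]

lemma matNN_Em (v : S) : ∀ i j, 0 ≤ Em v i j := fun i j => by
  rw [Em_apply]; split <;> norm_num

lemma matNN_oneSubEm (v : S) : ∀ i j, 0 ≤ ((1 : Matrix S S ℝ) - Em v) i j := fun i j => by
  rw [Matrix.sub_apply, Matrix.one_apply, Em_apply]
  by_cases hij : i = j
  · subst hij
    by_cases hiv : i = v <;> simp [hiv]
  · rw [if_neg hij, if_neg (fun h : i = v ∧ j = v => hij (h.1.trans h.2.symm))]
    norm_num

lemma Em_sandwich (v : S) (M : Matrix S S ℝ) :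
    Em v * M * Em v = (M v v) • Em v := by
  ext a b
  have hEM : ∀ k, (Em v * M) a k = (if a = v then (1:ℝ) else 0) * M v k := by
    intro k
    rw [Matrix.mul_apply, Finset.sum_eq_single v]
    · congr 1
      rw [Em_apply]
      by_cases ha : a = v <;> simp [ha]
    · intro l _ hl
      rw [Em_apply, if_neg (fun h => hl h.2), zero_mul]
    · intro h; exact absurd (Finset.mem_univ v) h
  rw [Matrix.smul_apply, Matrix.mul_apply, Finset.sum_eq_single v]
  · rw [hEM v, Em_apply, Em_apply, smul_eq_mul]
    by_cases ha : a = v <;> by_cases hb : b = v <;> simp [ha, hb]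
  · intro k _ hk
    rw [Em_apply, if_neg (fun h => hk h.1), mul_zero]
  · intro h; exact absurd (Finset.mem_univ v) h

/-- the fundamental last-exit expansion -/
lemma expandQ (Q : Matrix S S ℝ) (v : S) (m : ℕ) :
    Q ^ m = (Q * (1 - Em v)) ^ m
      + ∑ j ∈ range m, Q ^ (j + 1) * Em v * (Q * (1 - Em v)) ^ (m - 1 - j) := by
  induction m with
  | zero => simp
  | succ m ih =>
    set B : Matrix S S ℝ := Q * (1 - Em v) with hB
    have hQBE : Q = B + Q * Em v := by
      rw [hB, mul_sub, mul_one]; abel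
    have hstep : ∑ j ∈ range (m + 1), Q ^ (j + 1) * Em v * B ^ (m + 1 - 1 - j)
        = Q * (Q ^ m - B ^ m) + Q * (Em v * B ^ m) := by
      rw [Finset.sum_range_succ']
      have h0 : Q ^ (0 + 1) * Em v * B ^ (m + 1 - 1 - 0) = Q * (Em v * B ^ m) := by
        have e0 : m + 1 - 1 - 0 = m := by omega
        rw [e0, pow_one, mul_assoc]
      have h1 : ∀ j ∈ range m, Q ^ (j + 1 + 1) * Em v * B ^ (m + 1 - 1 - (j + 1))
          = Q * (Q ^ (j + 1) * Em v * B ^ (m - 1 - j)) := by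
        intro j hj
        have e1 : m + 1 - 1 - (j + 1) = m - 1 - j := by omega
        rw [e1, pow_succ' Q (j + 1), mul_assoc, mul_assoc, mul_assoc]
      rw [Finset.sum_congr rfl h1, h0, ← Finset.mul_sum]
      have ihs : ∑ j ∈ range m, Q ^ (j + 1) * Em v * B ^ (m - 1 - j)
          = Q ^ m - B ^ m := by
        rw [ih]; abel
      rw [ihs]
    rw [hstep]
    have hQB : Q * B ^ m = B * B ^ m + Q * Em v * B ^ m := by
      nth_rewrite 1 [hQBE]; rw [add_mul]
    rw [pow_succ' Q m, pow_succ' B m, mul_sub, hQB, ← mul_assoc]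
    abel

/-- sum over insertion positions bound -/
lemma lemPsum (Q : Matrix S S ℝ) (hQ : ∀ i j, 0 ≤ Q i j) (μ r : S → ℝ)
    (hμ : ∀ i, 0 ≤ μ i) (hr : ∀ j, 0 ≤ r j) (v : S) (m : ℕ) :
    ∑ x ∈ range (m + 1), phiA μ r (Q ^ x * Em v * (Q * (1 - Em v)) ^ (m - x))
      ≤ phiA μ r (Q ^ m) := by
  have hBNN : ∀ i j, 0 ≤ (Q * (1 - Em v)) i j := matNN_mul hQ (matNN_oneSubEm v)
  rw [Finset.sum_range_succ']
  have h1 : ∀ x ∈ range m, phiA μ r (Q ^ (x + 1) * Em v * (Q * (1 - Em v)) ^ (m - (x + 1)))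
      = phiA μ r (Q ^ (x + 1) * Em v * (Q * (1 - Em v)) ^ (m - 1 - x)) := by
    intro x hx
    have : m - (x + 1) = m - 1 - x := by omega
    rw [this]
  rw [Finset.sum_congr rfl h1, ← phiA_sum]
  have hexp : ∑ x ∈ range m, Q ^ (x + 1) * Em v * (Q * (1 - Em v)) ^ (m - 1 - x)
      = Q ^ m - (Q * (1 - Em v)) ^ m := by
    rw [expandQ Q v m]; abel
  rw [hexp]
  have h0 : Q ^ 0 * Em v * (Q * (1 - Em v)) ^ (m - 0) = Em v * (Q * (1 - Em v)) ^ m := by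
    rw [pow_zero, one_mul, Nat.sub_zero]
  rw [h0, phiA_sub]
  have hfinal : phiA μ r ((Q * (1 - Em v)) ^ m) - phiA μ r (Em v * (Q * (1 - Em v)) ^ m)
      = phiA μ r ((1 - Em v) * (Q * (1 - Em v)) ^ m) := by
    rw [← phiA_sub]
    congr 1
    rw [sub_mul, one_mul]
  have hpos : 0 ≤ phiA μ r ((1 - Em v) * (Q * (1 - Em v)) ^ m) :=
    phiA_nonneg μ r hμ hr _ (matNN_mul (matNN_oneSubEm v) (matNN_pow hBNN m))
  linarith

lemma tri_swap (f : ℕ → ℕ → ℝ) (h : ℕ) :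
    ∑ x ∈ range (h + 1), ∑ j ∈ range (h - x), f x j
      = ∑ j ∈ range h, ∑ x ∈ range (h - j), f x j := by
  rw [Finset.sum_sigma', Finset.sum_sigma']
  refine Finset.sum_nbij' (fun p => ⟨p.2, p.1⟩) (fun p => ⟨p.2, p.1⟩) ?_ ?_ ?_ ?_ ?_
  · rintro ⟨x, j⟩ hp
    simp only [Finset.mem_sigma, Finset.mem_range] at hp ⊢
    omega
  · rintro ⟨j, x⟩ hp
    simp only [Finset.mem_sigma, Finset.mem_range] at hp ⊢
    omega
  · rintro ⟨x, j⟩ _; rfl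
  · rintro ⟨j, x⟩ _; rfl
  · rintro ⟨x, j⟩ _; rfl

lemma lemD (Q : Matrix S S ℝ) (hQ : ∀ i j, 0 ≤ Q i j) (μ r : S → ℝ)
    (hμ : ∀ i, 0 ≤ μ i) (hr : ∀ j, 0 ≤ r j) (h : ℕ) :
    ((h : ℝ) + 1) * phiA μ r (Q ^ h)
      ≤ (Fintype.card S : ℝ) * phiA μ r (Q ^ h)
        + ∑ j ∈ range h, (∑ v, (Q ^ (j + 1)) v v) * phiA μ r (Q ^ (h - 1 - j)) := by
  have step1 : ((h : ℝ) + 1) * phiA μ r (Q ^ h)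
      = ∑ x ∈ range (h + 1), ∑ v : S, phiA μ r (Q ^ x * Em v * Q ^ (h - x)) := by
    have hxv : ∀ x ∈ range (h + 1), ∑ v : S, phiA μ r (Q ^ x * Em v * Q ^ (h - x))
        = phiA μ r (Q ^ h) := by
      intro x hx
      rw [Finset.mem_range] at hx
      rw [← phiA_sum]
      congr 1
      have e1 : ∑ v : S, Q ^ x * Em v * Q ^ (h - x)
          = Q ^ x * (∑ v : S, Em v) * Q ^ (h - x) := by
        rw [Finset.mul_sum, Finset.sum_mul]
      rw [e1, Em_sum, mul_one, ← pow_add]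
      congr 1
      omega
    rw [Finset.sum_congr rfl hxv, Finset.sum_const, Finset.card_range]
    simp [mul_comm]
  have step2 : ∀ x ∈ range (h + 1), ∀ v : S,
      phiA μ r (Q ^ x * Em v * Q ^ (h - x))
        = phiA μ r (Q ^ x * Em v * (Q * (1 - Em v)) ^ (h - x))
          + ∑ j ∈ range (h - x), (Q ^ (j + 1)) v v
              * phiA μ r (Q ^ x * Em v * (Q * (1 - Em v)) ^ (h - x - 1 - j)) := by
    intro x _ v
    have hexp := expandQ Q v (h - x)
    calc phiA μ r (Q ^ x * Em v * Q ^ (h - x))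
        = phiA μ r (Q ^ x * Em v * (Q * (1 - Em v)) ^ (h - x)
            + ∑ j ∈ range (h - x), Q ^ x * Em v
                * (Q ^ (j + 1) * Em v * (Q * (1 - Em v)) ^ (h - x - 1 - j))) := by
          rw [← Finset.mul_sum, ← mul_add, ← hexp]
      _ = phiA μ r (Q ^ x * Em v * (Q * (1 - Em v)) ^ (h - x))
          + ∑ j ∈ range (h - x), (Q ^ (j + 1)) v v
              * phiA μ r (Q ^ x * Em v * (Q * (1 - Em v)) ^ (h - x - 1 - j)) := by
          rw [phiA_add, phiA_sum]
          congr 1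
          refine Finset.sum_congr rfl ?_
          intro j _
          have assoc : Q ^ x * Em v * (Q ^ (j + 1) * Em v * (Q * (1 - Em v)) ^ (h - x - 1 - j))
              = Q ^ x * (Em v * Q ^ (j + 1) * Em v) * (Q * (1 - Em v)) ^ (h - x - 1 - j) := by
            simp only [mul_assoc]
          rw [assoc, Em_sandwich, mul_smul_comm, smul_mul_assoc, phiA_smul]
  rw [step1, Finset.sum_congr rfl (fun x hx => by
    rw [Finset.sum_congr rfl (fun v _ => step2 x hx v), Finset.sum_add_distrib])]
  rw [Finset.sum_add_distrib]
  have bound1 : ∑ x ∈ range (h + 1), ∑ v : S,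
      phiA μ r (Q ^ x * Em v * (Q * (1 - Em v)) ^ (h - x))
        ≤ (Fintype.card S : ℝ) * phiA μ r (Q ^ h) := by
    rw [Finset.sum_comm]
    calc ∑ v : S, ∑ x ∈ range (h + 1), phiA μ r (Q ^ x * Em v * (Q * (1 - Em v)) ^ (h - x))
        ≤ ∑ v : S, phiA μ r (Q ^ h) :=
          Finset.sum_le_sum fun v _ => lemPsum Q hQ μ r hμ hr v h
      _ = (Fintype.card S : ℝ) * phiA μ r (Q ^ h) := by
          rw [Finset.sum_const]; simp [mul_comm]
  have bound2 : ∑ x ∈ range (h + 1), ∑ v : S,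
      (∑ j ∈ range (h - x), (Q ^ (j + 1)) v v
        * phiA μ r (Q ^ x * Em v * (Q * (1 - Em v)) ^ (h - x - 1 - j)))
      ≤ ∑ j ∈ range h, (∑ v, (Q ^ (j + 1)) v v) * phiA μ r (Q ^ (h - 1 - j)) := by
    rw [Finset.sum_comm]
    have perv : ∀ v : S, ∑ x ∈ range (h + 1), ∑ j ∈ range (h - x),
        (Q ^ (j + 1)) v v * phiA μ r (Q ^ x * Em v * (Q * (1 - Em v)) ^ (h - x - 1 - j))
          ≤ ∑ j ∈ range h, (Q ^ (j + 1)) v v * phiA μ r (Q ^ (h - 1 - j)) := by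
      intro v
      rw [tri_swap]
      refine Finset.sum_le_sum ?_
      intro j hj
      rw [Finset.mem_range] at hj
      have e2 : ∀ x ∈ range (h - j), (Q ^ (j + 1)) v v
          * phiA μ r (Q ^ x * Em v * (Q * (1 - Em v)) ^ (h - x - 1 - j))
          = (Q ^ (j + 1)) v v
          * phiA μ r (Q ^ x * Em v * (Q * (1 - Em v)) ^ ((h - 1 - j) - x)) := by
        intro x _
        have : h - x - 1 - j = (h - 1 - j) - x := by omega
        rw [this]
      rw [Finset.sum_congr rfl e2, ← Finset.mul_sum]
      have hrange : h - j = (h - 1 - j) + 1 := by omega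
      refine mul_le_mul_of_nonneg_left ?_ (matNN_pow hQ (j + 1) v v)
      rw [hrange]
      exact lemPsum Q hQ μ r hμ hr v (h - 1 - j)
    calc ∑ v : S, ∑ x ∈ range (h + 1), ∑ j ∈ range (h - x),
        (Q ^ (j + 1)) v v * phiA μ r (Q ^ x * Em v * (Q * (1 - Em v)) ^ (h - x - 1 - j))
        ≤ ∑ v : S, ∑ j ∈ range h, (Q ^ (j + 1)) v v * phiA μ r (Q ^ (h - 1 - j)) :=
          Finset.sum_le_sum fun v _ => perv v
      _ = ∑ j ∈ range h, (∑ v, (Q ^ (j + 1)) v v) * phiA μ r (Q ^ (h - 1 - j)) := by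
          rw [Finset.sum_comm]
          exact Finset.sum_congr rfl fun j _ => by rw [Finset.sum_mul]
  exact add_le_add bound1 bound2

lemma inj_bound (Aa Bb : ℕ → ℝ) (hA : ∀ a, 0 ≤ Aa a) (hB : ∀ b, 0 ≤ Bb b) (Hn N : ℕ) :
    ∑ m ∈ range N, ∑ j ∈ range (m + Hn), Aa (j + 1) * Bb (m + Hn - 1 - j)
      ≤ (∑ a ∈ range (N + Hn), Aa (a + 1)) * (∑ b ∈ range (N + Hn), Bb b) := by
  rw [Finset.sum_mul_sum, Finset.sum_sigma']
  rw [← Finset.sum_product']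
  set s : Finset ((_ : ℕ) × ℕ) := (range N).sigma (fun m => range (m + Hn)) with hs
  set t : Finset (ℕ × ℕ) := (range (N + Hn)) ×ˢ (range (N + Hn)) with ht
  have himg : ∀ p ∈ s, ((p.2, p.1 + Hn - 1 - p.2) : ℕ × ℕ) ∈ t := by
    rintro ⟨m, j⟩ hp
    simp only [hs, Finset.mem_sigma, Finset.mem_range] at hp
    simp only [ht, Finset.mem_product, Finset.mem_range]
    omega
  have hinj : Set.InjOn (fun p : (_ : ℕ) × ℕ => ((p.2, p.1 + Hn - 1 - p.2) : ℕ × ℕ)) s := by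
    rintro ⟨m, j⟩ hp ⟨m', j'⟩ hp' he
    simp only [hs, Finset.coe_sigma, Set.mem_sigma_iff, Finset.mem_coe, Finset.mem_range] at hp hp'
    simp only [Prod.mk.injEq] at he
    obtain ⟨h1, h2⟩ := he
    have : m = m' := by omega
    simp [this, h1]
  calc ∑ p ∈ s, Aa (p.2 + 1) * Bb (p.1 + Hn - 1 - p.2)
      = ∑ p ∈ s.image (fun p : (_ : ℕ) × ℕ => ((p.2, p.1 + Hn - 1 - p.2) : ℕ × ℕ)),
          Aa (p.1 + 1) * Bb p.2 := by
        rw [Finset.sum_image (fun p hp q hq => hinj hp hq)]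
    _ ≤ ∑ p ∈ t, Aa (p.1 + 1) * Bb p.2 := by
        refine Finset.sum_le_sum_of_subset_of_nonneg ?_ ?_
        · intro p hp
          rw [Finset.mem_image] at hp
          obtain ⟨q, hq, rfl⟩ := hp
          exact himg q hq
        · intro p _ _
          exact mul_nonneg (hA _) (hB _)

lemma pReach_eq_vecMul (μ : S → ℝ) (P : S → S → ℝ) :
    ∀ (h : ℕ) (s : S), pReach μ P h s = Matrix.vecMul μ ((Matrix.of P) ^ h) s := by
  intro h
  induction h with
  | zero =>
    intro s
    rw [pReach_zero, pow_zero, Matrix.vecMul_one]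
  | succ L ih =>
    intro s
    rw [pReach_succ, pow_succ, ← Matrix.vecMul_vecMul]
    rw [Matrix.vecMul, dotProduct]
    exact Finset.sum_congr rfl fun s' _ => by rw [ih s']; rfl

lemma q_eq_phiA (μ r : S → ℝ) (P : S → S → ℝ) (h : ℕ) :
    ∑ s, pReach μ P h s * r s = phiA μ r ((Matrix.of P) ^ h) := by
  rw [phiA, Finset.sum_comm]
  refine Finset.sum_congr rfl ?_
  intro s _
  rw [pReach_eq_vecMul, Matrix.vecMul, dotProduct, Finset.sum_mul]
  exact Finset.sum_congr rfl fun i _ => by ring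

lemma rowsum_pow (Q : Matrix S S ℝ) (hrow : ∀ i, ∑ j, Q i j = 1) :
    ∀ (g : ℕ) (i : S), ∑ j, (Q ^ g) i j = 1 := by
  intro g
  induction g with
  | zero => intro i; simp [Matrix.one_apply]
  | succ g ih =>
    intro i
    have : ∀ j : S, (Q ^ (g + 1)) i j = ∑ k, (Q ^ g) i k * Q k j := by
      intro j; rw [pow_succ, Matrix.mul_apply]
    rw [Finset.sum_congr rfl fun j _ => this j, Finset.sum_comm]
    calc ∑ k : S, ∑ j : S, (Q ^ g) i k * Q k j
        = ∑ k : S, (Q ^ g) i k * ∑ j, Q k j := by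
          exact Finset.sum_congr rfl fun k _ => by rw [Finset.mul_sum]
      _ = 1 := by
          rw [Finset.sum_congr rfl fun k (_ : k ∈ univ) => by rw [hrow k, mul_one]]
          exact ih i

lemma diag_le_one (Q : Matrix S S ℝ) (hQ : ∀ i j, 0 ≤ Q i j)
    (hrow : ∀ i, ∑ j, Q i j = 1) (g : ℕ) (v : S) : (Q ^ g) v v ≤ 1 := by
  have h1 := rowsum_pow Q hrow g v
  have h2 : (Q ^ g) v v ≤ ∑ j, (Q ^ g) v j :=
    Finset.single_le_sum (fun j _ => matNN_pow hQ g v j) (Finset.mem_univ v)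
  linarith

end Mat

end Stmt4Aux

set_option maxHeartbeats 2000000 in
open Stmt4Aux in
theorem stmt4 {S A : Type} [Fintype S]
    (μ : S → ℝ) (P : S → A → S → ℝ) (Rmean : S → A → ℝ) (H : ℕ)
    (hμ0 : ∀ s, 0 ≤ μ s) (hμ1 : ∑ s, μ s = 1)
    (hP0 : ∀ s a s', 0 ≤ P s a s') (hP1 : ∀ s a, ∑ s', P s a s' = 1)
    (hR : ∀ s a, Rmean s a ∈ Set.Icc (0 : ℝ) 1)
    (π : S → A)
    (hH : 2 * Real.log (8 * (Fintype.card S : ℝ) ^ (4 * Fintype.card S)) ≤ (H : ℝ)) :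
    (1 / (64 * (Fintype.card S : ℝ) ^ (8 * Fintype.card S))) *
        Vfin μ (fun s s' => P s (π s) s') (fun s => Rmean s (π s)) H ≤
      Vdisc μ (fun s s' => P s (π s) s') (fun s => Rmean s (π s))
        (1 - Real.log (8 * (Fintype.card S : ℝ) ^ (4 * Fintype.card S)) / H) ∧
    Vdisc μ (fun s s' => P s (π s) s') (fun s => Rmean s (π s))
        (1 - Real.log (8 * (Fintype.card S : ℝ) ^ (4 * Fintype.card S)) / H) ≤
      2 * Vfin μ (fun s s' => P s (π s) s') (fun s => Rmean s (π s)) H := by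
  classical
  have hSne : Nonempty S := by
    by_contra hemp
    rw [not_nonempty_iff] at hemp
    rw [Finset.univ_eq_empty, Finset.sum_empty] at hμ1
    norm_num at hμ1
  obtain ⟨Pc, hPcdef⟩ : ∃ p : S → S → ℝ, p = fun s s' => P s (π s) s' := ⟨_, rfl⟩
  obtain ⟨rc, hrcdef⟩ : ∃ r : S → ℝ, r = fun s => Rmean s (π s) := ⟨_, rfl⟩
  set n := Fintype.card S with hncard
  obtain ⟨L, hLdef⟩ : ∃ x : ℝ, x = Real.log (8 * (n : ℝ) ^ (4 * n)) := ⟨_, rfl⟩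
  rw [← hLdef] at hH
  obtain ⟨γ, hγdef⟩ : ∃ x : ℝ, x = 1 - L / (H : ℝ) := ⟨_, rfl⟩
  rw [← hPcdef, ← hrcdef, ← hLdef, ← hγdef]
  -- numeric facts
  have hn1 : 1 ≤ n := by rw [hncard]; exact Fintype.card_pos
  have hNr1 : (1 : ℝ) ≤ (n : ℝ) := by exact_mod_cast hn1
  have hKpos : (0 : ℝ) < 8 * (n : ℝ) ^ (4 * n) := by positivity
  have hlog8 : (2 : ℝ) ≤ Real.log 8 := by
    have h2 : Real.log 8 = 3 * Real.log 2 := by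
      rw [show (8 : ℝ) = 2 ^ (3 : ℕ) by norm_num, Real.log_pow]
      push_cast; ring
    nlinarith [Real.log_two_gt_d9]
  have hLsplit : L = Real.log 8 + (4 * n : ℕ) * Real.log (n : ℝ) := by
    rw [hLdef, Real.log_mul (by norm_num) (ne_of_gt (pow_pos (by linarith) _)), Real.log_pow]
  have hL2n : 2 * (n : ℝ) ≤ L := by
    rw [hLsplit]
    rcases eq_or_lt_of_le hn1 with h1 | h2
    · rw [← h1]
      push_cast
      simp [Real.log_one]
      linarith
    · have hn2 : (2 : ℝ) ≤ (n : ℝ) := by exact_mod_cast h2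
      have hlogn : (1 / 2 : ℝ) ≤ Real.log (n : ℝ) := by
        have hmono := Real.log_le_log (by norm_num : (0:ℝ) < 2) hn2
        nlinarith [Real.log_two_gt_d9]
      have h3 : (2 : ℝ) * n ≤ (4 * n : ℕ) * Real.log (n : ℝ) := by
        push_cast
        nlinarith [hNr1]
      linarith
  have hLpos : (0 : ℝ) < L := by linarith
  have hHpos : (0 : ℝ) < (H : ℝ) := by linarith
  have hγhalf : (1 / 2 : ℝ) ≤ γ := by
    rw [hγdef]
    have : L / (H : ℝ) ≤ 1 / 2 := by rw [div_le_iff₀ hHpos]; linarith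
    linarith
  have hγ0 : (0 : ℝ) ≤ γ := le_trans (by norm_num) hγhalf
  have hγ1 : γ < 1 := by
    rw [hγdef]
    have : 0 < L / (H : ℝ) := div_pos hLpos hHpos
    linarith
  -- matrix and chain facts
  obtain ⟨Qm, hQm⟩ : ∃ M : Matrix S S ℝ, M = Matrix.of Pc := ⟨_, rfl⟩
  have hQapp : ∀ i j, Qm i j = P i (π i) j := by
    intro i j; rw [hQm, hPcdef]; rfl
  have hQNN : ∀ i j, 0 ≤ Qm i j := fun i j => by rw [hQapp]; exact hP0 i (π i) j
  have hQrow : ∀ i, ∑ j, Qm i j = 1 := fun i => by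
    rw [Finset.sum_congr rfl fun j _ => hQapp i j]; exact hP1 i (π i)
  have hrc0 : ∀ s, 0 ≤ rc s := fun s => by rw [hrcdef]; exact (hR s (π s)).1
  have hrc1 : ∀ s, rc s ≤ 1 := fun s => by rw [hrcdef]; exact (hR s (π s)).2
  have hPc0 : ∀ i j, 0 ≤ Pc i j := fun i j => by rw [hPcdef]; exact hP0 i (π i) j
  have hPc1 : ∀ i, ∑ j, Pc i j = 1 := fun i => by rw [hPcdef]; exact hP1 i (π i)
  have hpnn : ∀ (h : ℕ) (s : S), 0 ≤ pReach μ Pc h s := pReach_nonneg μ Pc hμ0 hPc0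
  have hmass : ∀ h : ℕ, ∑ s, pReach μ Pc h s = 1 := pReach_mass μ Pc hμ1 hPc1
  have hple1 : ∀ (h : ℕ) (s : S), pReach μ Pc h s ≤ 1 := by
    intro h s
    have h1 := Finset.single_le_sum (f := fun s => pReach μ Pc h s)
      (fun i _ => hpnn h i) (Finset.mem_univ s)
    rw [hmass h] at h1
    exact h1
  obtain ⟨q, hq⟩ : ∃ qq : ℕ → ℝ, ∀ h, qq h = ∑ s, pReach μ Pc h s * rc s :=
    ⟨_, fun _ => rfl⟩
  have hq_phi : ∀ h, q h = phiA μ rc (Qm ^ h) := fun h => by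
    rw [hq, hQm]; exact q_eq_phiA μ rc Pc h
  have hq0 : ∀ h, 0 ≤ q h := fun h => by
    rw [hq]
    exact Finset.sum_nonneg fun s _ => mul_nonneg (hpnn h s) (hrc0 s)
  have hq1 : ∀ h, q h ≤ 1 := by
    intro h
    rw [hq]
    calc (∑ s, pReach μ Pc h s * rc s) ≤ ∑ s, pReach μ Pc h s * 1 :=
          Finset.sum_le_sum fun s _ => mul_le_mul_of_nonneg_left (hrc1 s) (hpnn h s)
      _ = 1 := by simpa using hmass h
  -- summability
  have hsumgeo : Summable (fun h : ℕ => γ ^ h) := summable_geometric_of_lt_one hγ0 hγ1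
  have hsumq : Summable (fun h : ℕ => γ ^ h * q h) := by
    refine Summable.of_nonneg_of_le
      (fun h => mul_nonneg (pow_nonneg hγ0 h) (hq0 h)) (fun h => ?_) hsumgeo
    calc γ ^ h * q h ≤ γ ^ h * 1 := mul_le_mul_of_nonneg_left (hq1 h) (pow_nonneg hγ0 h)
      _ = γ ^ h := mul_one _
  have hsum_s : ∀ s : S, Summable (fun h : ℕ => γ ^ h * pReach μ Pc h s * rc s) := by
    intro s
    refine Summable.of_nonneg_of_le
      (fun h => mul_nonneg (mul_nonneg (pow_nonneg hγ0 h) (hpnn h s)) (hrc0 s))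
      (fun h => ?_) hsumgeo
    calc γ ^ h * pReach μ Pc h s * rc s ≤ γ ^ h * 1 * 1 := by
          apply mul_le_mul
          · exact mul_le_mul_of_nonneg_left (hple1 h s) (pow_nonneg hγ0 h)
          · exact hrc1 s
          · exact hrc0 s
          · exact mul_nonneg (pow_nonneg hγ0 h) zero_le_one
      _ = γ ^ h := by ring
  obtain ⟨F, hF⟩ : ∃ x : ℝ, x = ∑ h ∈ range H, q h := ⟨_, rfl⟩
  obtain ⟨G, hG⟩ : ∃ x : ℝ, x = ∑' h : ℕ, γ ^ h * q h := ⟨_, rfl⟩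
  obtain ⟨T, hT⟩ : ∃ x : ℝ, x = ∑' m : ℕ, γ ^ (m + H) * q (m + H) := ⟨_, rfl⟩
  have hsplit : (∑ h ∈ range H, γ ^ h * q h) + T = G := by
    rw [hT, hG]; exact Summable.sum_add_tsum_nat_add H hsumq
  have hT0 : 0 ≤ T := by
    rw [hT]
    exact tsum_nonneg fun m => mul_nonneg (pow_nonneg hγ0 _) (hq0 _)
  have hFγF : (∑ h ∈ range H, γ ^ h * q h) ≤ F := by
    rw [hF]
    refine Finset.sum_le_sum fun h _ => ?_
    calc γ ^ h * q h ≤ 1 * q h :=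
          mul_le_mul_of_nonneg_right (pow_le_one₀ hγ0 hγ1.le) (hq0 h)
      _ = q h := one_mul _
  have hF0 : 0 ≤ F := by
    rw [hF]; exact Finset.sum_nonneg fun h _ => hq0 h
  have hG0 : 0 ≤ G := by
    rw [hG]
    exact tsum_nonneg fun h => mul_nonneg (pow_nonneg hγ0 _) (hq0 _)
  -- identification with Vfin / Vdisc
  have hVfin : Vfin μ Pc rc H = F := by
    rw [Vfin, hF]
    calc ∑ s, (∑ h ∈ range H, pReach μ Pc h s) * rc s
        = ∑ s, ∑ h ∈ range H, pReach μ Pc h s * rc s :=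
          Finset.sum_congr rfl fun s _ => Finset.sum_mul _ _ _
      _ = ∑ h ∈ range H, ∑ s, pReach μ Pc h s * rc s := Finset.sum_comm
      _ = ∑ h ∈ range H, q h := Finset.sum_congr rfl fun h _ => (hq h).symm
  have hVdisc : Vdisc μ Pc rc γ = G := by
    rw [Vdisc, hG]
    have h1 : ∀ s : S, (∑' h : ℕ, γ ^ h * pReach μ Pc h s) * rc s
        = ∑' h : ℕ, γ ^ h * pReach μ Pc h s * rc s := fun s => by
      rw [tsum_mul_right]
    rw [Finset.sum_congr rfl fun s _ => h1 s]
    rw [← Summable.tsum_finsetSum (fun s _ => hsum_s s)]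
    refine tsum_congr fun h => ?_
    rw [hq, Finset.mul_sum]
    exact Finset.sum_congr rfl fun s _ => by ring
  -- the key combinatorial inequality for q
  have hD : ∀ h : ℕ, (((h : ℝ)) + 1 - (n : ℝ)) * q h
      ≤ ∑ j ∈ range h, (∑ v, (Qm ^ (j + 1)) v v) * q (h - 1 - j) := by
    intro h
    have hlem := lemD Qm hQNN μ rc hμ0 hrc0 h
    rw [← hq_phi h] at hlem
    rw [Finset.sum_congr rfl (fun j (_ : j ∈ range h) => by
      rw [← hq_phi (h - 1 - j)])] at hlem
    rw [← hncard] at hlem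
    nlinarith [hlem]
  have htr_le : ∀ g : ℕ, (∑ v, (Qm ^ g) v v) ≤ (n : ℝ) := by
    intro g
    calc ∑ v, (Qm ^ g) v v ≤ ∑ _v : S, (1 : ℝ) :=
          Finset.sum_le_sum fun v _ => diag_le_one Qm hQNN hQrow g v
      _ = (n : ℝ) := by rw [Finset.sum_const, Finset.card_univ, ← hncard]; simp
  have htr_nn : ∀ g : ℕ, 0 ≤ ∑ v, (Qm ^ g) v v := fun g =>
    Finset.sum_nonneg fun v _ => matNN_pow hQNN g v v
  have hApos : (0 : ℝ) < (H : ℝ) + 1 - (n : ℝ) := by linarith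
  have hgeo_partial : ∀ M : ℕ, (∑ b ∈ range M, γ ^ b) ≤ (1 - γ)⁻¹ := by
    intro M
    have h1 := Summable.sum_le_tsum (range M) (fun b _ => pow_nonneg hγ0 b) hsumgeo
    rwa [tsum_geometric_of_lt_one hγ0 hγ1] at h1
  have hGpartial : ∀ M : ℕ, (∑ b ∈ range M, γ ^ b * q b) ≤ G := fun M => by
    rw [hG]
    exact Summable.sum_le_tsum (range M) (fun b _ => mul_nonneg (pow_nonneg hγ0 b) (hq0 b)) hsumq
  have hkey : ((H : ℝ) + 1 - (n : ℝ)) * T ≤ ((n : ℝ) * (γ * (1 - γ)⁻¹)) * G := by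
    rw [hT, ← tsum_mul_left]
    apply Real.tsum_le_of_sum_range_le
    · intro m
      exact mul_nonneg hApos.le (mul_nonneg (pow_nonneg hγ0 _) (hq0 _))
    · intro N
      have perm : ∀ m ∈ range N,
          ((H : ℝ) + 1 - (n : ℝ)) * (γ ^ (m + H) * q (m + H))
            ≤ ∑ j ∈ range (m + H),
                (γ ^ (j + 1) * (∑ v, (Qm ^ (j + 1)) v v))
                  * (γ ^ (m + H - 1 - j) * q (m + H - 1 - j)) := by
        intro m _
        have hd := hD (m + H)
        have ha : (0 : ℝ) ≤ γ ^ (m + H) := pow_nonneg hγ0 _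
        have hcast : ((H : ℝ) + 1 - (n : ℝ)) ≤ (((m + H : ℕ) : ℝ) + 1 - (n : ℝ)) := by
          push_cast
          linarith [Nat.cast_nonneg (α := ℝ) m]
        have step1 : ((H : ℝ) + 1 - (n : ℝ)) * (γ ^ (m + H) * q (m + H))
            ≤ γ ^ (m + H) * ((((m + H : ℕ) : ℝ) + 1 - (n : ℝ)) * q (m + H)) := by
          have hqn := hq0 (m + H)
          nlinarith [mul_nonneg (mul_nonneg ha hqn) (sub_nonneg.2 hcast)]
        have step2 : γ ^ (m + H) * ((((m + H : ℕ) : ℝ) + 1 - (n : ℝ)) * q (m + H))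
            ≤ γ ^ (m + H) * (∑ j ∈ range (m + H),
                (∑ v, (Qm ^ (j + 1)) v v) * q (m + H - 1 - j)) :=
          mul_le_mul_of_nonneg_left hd ha
        have step3 : γ ^ (m + H) * (∑ j ∈ range (m + H),
                (∑ v, (Qm ^ (j + 1)) v v) * q (m + H - 1 - j))
            = ∑ j ∈ range (m + H),
                (γ ^ (j + 1) * (∑ v, (Qm ^ (j + 1)) v v))
                  * (γ ^ (m + H - 1 - j) * q (m + H - 1 - j)) := by
          rw [Finset.mul_sum]
          refine Finset.sum_congr rfl ?_
          intro j hj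
          rw [Finset.mem_range] at hj
          have hpow : γ ^ (m + H) = γ ^ (j + 1) * γ ^ (m + H - 1 - j) := by
            rw [← pow_add]
            congr 1
            omega
          rw [hpow]; ring
        calc ((H : ℝ) + 1 - (n : ℝ)) * (γ ^ (m + H) * q (m + H))
            ≤ γ ^ (m + H) * ((((m + H : ℕ) : ℝ) + 1 - (n : ℝ)) * q (m + H)) := step1
          _ ≤ _ := by rw [← step3]; exact step2
      calc ∑ m ∈ range N, ((H : ℝ) + 1 - (n : ℝ)) * (γ ^ (m + H) * q (m + H))
          ≤ ∑ m ∈ range N, ∑ j ∈ range (m + H),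
              (γ ^ (j + 1) * (∑ v, (Qm ^ (j + 1)) v v))
                * (γ ^ (m + H - 1 - j) * q (m + H - 1 - j)) :=
            Finset.sum_le_sum perm
        _ ≤ (∑ a ∈ range (N + H), γ ^ (a + 1) * (∑ v, (Qm ^ (a + 1)) v v))
              * (∑ b ∈ range (N + H), γ ^ b * q b) :=
            inj_bound (fun a => γ ^ a * (∑ v, (Qm ^ a) v v)) (fun b => γ ^ b * q b)
              (fun a => mul_nonneg (pow_nonneg hγ0 a) (htr_nn a))
              (fun b => mul_nonneg (pow_nonneg hγ0 b) (hq0 b)) H N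
        _ ≤ ((n : ℝ) * (γ * (1 - γ)⁻¹)) * G := by
            have hAbound : (∑ a ∈ range (N + H), γ ^ (a + 1) * (∑ v, (Qm ^ (a + 1)) v v))
                ≤ (n : ℝ) * (γ * (1 - γ)⁻¹) := by
              calc ∑ a ∈ range (N + H), γ ^ (a + 1) * (∑ v, (Qm ^ (a + 1)) v v)
                  ≤ ∑ a ∈ range (N + H), γ ^ (a + 1) * (n : ℝ) :=
                    Finset.sum_le_sum fun a _ =>
                      mul_le_mul_of_nonneg_left (htr_le (a + 1)) (pow_nonneg hγ0 _)
                _ = (n : ℝ) * (γ * ∑ a ∈ range (N + H), γ ^ a) := by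
                    rw [Finset.mul_sum, Finset.mul_sum]
                    refine Finset.sum_congr rfl fun a _ => ?_
                    rw [pow_succ']
                    ring
                _ ≤ (n : ℝ) * (γ * (1 - γ)⁻¹) := by
                    have h1 := hgeo_partial (N + H)
                    have h2 : γ * (∑ a ∈ range (N + H), γ ^ a) ≤ γ * (1 - γ)⁻¹ :=
                      mul_le_mul_of_nonneg_left h1 hγ0
                    exact mul_le_mul_of_nonneg_left h2 (by linarith)
            have hBbound := hGpartial (N + H)
            have hBnn : 0 ≤ ∑ b ∈ range (N + H), γ ^ b * q b :=
              Finset.sum_nonneg fun b _ => mul_nonneg (pow_nonneg hγ0 b) (hq0 b)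
            have hAnn : (0:ℝ) ≤ (n : ℝ) * (γ * (1 - γ)⁻¹) := by
              have hi : (0:ℝ) ≤ (1 - γ)⁻¹ := by
                apply inv_nonneg.2; linarith
              have : (0:ℝ) ≤ (n:ℝ) := by linarith
              exact mul_nonneg this (mul_nonneg hγ0 hi)
            exact mul_le_mul hAbound hBbound hBnn hAnn
  have hhalf : (n : ℝ) * (γ * (1 - γ)⁻¹) ≤ ((H : ℝ) + 1 - (n : ℝ)) / 2 := by
    have h1γ : 1 - γ = L / (H : ℝ) := by rw [hγdef]; ring
    have hinv : (1 - γ)⁻¹ = (H : ℝ) / L := by rw [h1γ, inv_div]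
    have hγH : γ * (H : ℝ) = (H : ℝ) - L := by
      rw [hγdef]
      field_simp
    have hmain : (n : ℝ) * (γ * ((H : ℝ) / L)) = ((n : ℝ) * ((H : ℝ) - L)) / L := by
      rw [← hγH]
      field_simp
    rw [hinv, hmain, div_le_div_iff₀ hLpos (by norm_num : (0:ℝ) < 2)]
    nlinarith [mul_nonneg (sub_nonneg.2 hL2n) (sub_nonneg.2 (by linarith : L ≤ (H : ℝ))),
      mul_nonneg hLpos.le (by linarith : (0:ℝ) ≤ 1 + L - (n : ℝ))]
  have hT_half : 2 * T ≤ G := by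
    have h2 : ((H : ℝ) + 1 - (n : ℝ)) * T ≤ (((H : ℝ) + 1 - (n : ℝ)) / 2) * G :=
      le_trans hkey (mul_le_mul_of_nonneg_right hhalf hG0)
    nlinarith [hApos, h2]
  have hTF : T ≤ F := by linarith [hsplit, hFγF]
  have hupper : G ≤ 2 * F := by linarith [hsplit, hFγF, hTF]
  -- lower bound
  have hKeq : Real.exp L = 8 * (n : ℝ) ^ (4 * n) := by
    rw [hLdef]; exact Real.exp_log hKpos
  have h64 : (8 * (n : ℝ) ^ (4 * n)) ^ 2 = 64 * (n : ℝ) ^ (8 * n) := by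
    rw [mul_pow, ← pow_mul, show 4 * n * 2 = 8 * n by ring]
    norm_num
  have hexp2 : Real.exp (-(2 * L)) = (64 * (n : ℝ) ^ (8 * n))⁻¹ := by
    rw [← h64, ← hKeq, show -(2 * L) = -(L + L) by ring, Real.exp_neg, Real.exp_add, pow_two]
  have hγexp : Real.exp (-(2 * (L / (H : ℝ)))) ≤ γ := by
    have ht_half : L / (H : ℝ) ≤ 1 / 2 := by rw [div_le_iff₀ hHpos]; linarith
    have ht_pos : 0 < L / (H : ℝ) := div_pos hLpos hHpos
    have h1 : 1 + 2 * (L / (H : ℝ)) ≤ Real.exp (2 * (L / (H : ℝ))) := by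
      have := Real.add_one_le_exp (2 * (L / (H : ℝ)))
      linarith
    have hpos : (0 : ℝ) < 1 + 2 * (L / (H : ℝ)) := by linarith
    have h3 : (Real.exp (2 * (L / (H : ℝ))))⁻¹ ≤ (1 + 2 * (L / (H : ℝ)))⁻¹ :=
      inv_anti₀ hpos h1
    have h4 : (1 + 2 * (L / (H : ℝ)))⁻¹ ≤ 1 - L / (H : ℝ) := by
      rw [show (1 + 2 * (L / (H : ℝ)))⁻¹ = 1 / (1 + 2 * (L / (H : ℝ))) by rw [one_div],
        div_le_iff₀ hpos]
      nlinarith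
    calc Real.exp (-(2 * (L / (H : ℝ)))) = (Real.exp (2 * (L / (H : ℝ))))⁻¹ := by
          rw [Real.exp_neg]
      _ ≤ (1 + 2 * (L / (H : ℝ)))⁻¹ := h3
      _ ≤ 1 - L / (H : ℝ) := h4
      _ = γ := hγdef.symm
  have hγHge : (64 * (n : ℝ) ^ (8 * n))⁻¹ ≤ γ ^ H := by
    have h1 : Real.exp (-(2 * (L / (H : ℝ)))) ^ H ≤ γ ^ H :=
      pow_le_pow_left₀ (Real.exp_nonneg _) hγexp H
    have h2 : Real.exp (-(2 * (L / (H : ℝ)))) ^ H = Real.exp (-(2 * L)) := by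
      rw [← Real.exp_nat_mul]
      congr 1
      have hH0 : (H:ℝ) ≠ 0 := ne_of_gt hHpos
      field_simp
    rw [← hexp2, ← h2]
    exact h1
  have hlower : (1 / (64 * (n : ℝ) ^ (8 * n))) * F ≤ G := by
    have h1 : γ ^ H * F ≤ ∑ h ∈ range H, γ ^ h * q h := by
      rw [hF, Finset.mul_sum]
      refine Finset.sum_le_sum fun h hh => ?_
      rw [Finset.mem_range] at hh
      exact mul_le_mul_of_nonneg_right (pow_le_pow_of_le_one hγ0 hγ1.le hh.le) (hq0 h)
    have h2 : (1 / (64 * (n : ℝ) ^ (8 * n))) * F ≤ γ ^ H * F := by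
      rw [one_div]
      exact mul_le_mul_of_nonneg_right hγHge hF0
    linarith [hsplit, hT0]
  constructor
  · rw [hVfin, hVdisc]
    exact hlower
  · rw [hVfin, hVdisc]
    exact hupper
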